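/- Gradient descent convergence rate for convex smooth functions: Let f: ℝ^d → ℝ be convex and differentiable with G-Lipschitz gradient (‖∇f(x)-∇f(y)‖ ≤ G‖x-y‖). Fix a step size s with 0 < s ≤ 1/G, and iterate x^{k+1} = x^k - s∇f(x^k). If x* is a minimizer of f, then for all k ≥ 1, f(x^k) - f(x*) ≤ ‖x⁰ - x*‖²/(2sk). -/

import Mathlib

open InnerProductSpace

variable {d : ℕ}
local notation "E" => EuclideanSpace ℝ (Fin d)
local notation "⟪" a ", " b "⟫" => @inner ℝ _ _ a b

lemma line_deriv (f : EuclideanSpace ℝ (Fin d) → ℝ) (g x v : EuclideanSpace ℝ (Fin d)) (t₀ : ℝ)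
    (h : HasGradientAt f g (x + t₀ • v)) :
    HasDerivAt (fun t : ℝ => f (x + t • v)) ⟪g, v⟫ t₀ := by
  have hc : HasDerivAt (fun t : ℝ => x + t • v) v t₀ := by
    simpa using ((hasDerivAt_id t₀).smul_const v).const_add x
  have := h.hasFDerivAt.comp_hasDerivAt t₀ hc
  simpa [InnerProductSpace.toDual_apply_apply, Function.comp_def] using this

lemma grad_ineq (f : EuclideanSpace ℝ (Fin d) → ℝ) (f' : EuclideanSpace ℝ (Fin d) → EuclideanSpace ℝ (Fin d))
    (hconv : ConvexOn ℝ Set.univ f) (hgrad : ∀ x, HasGradientAt f (f' x) x)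
    (x y : EuclideanSpace ℝ (Fin d)) :
    f x + ⟪f' x, y - x⟫ ≤ f y := by
  have hD : HasDerivAt (fun t : ℝ => f (x + t • (y - x))) ⟪f' x, y - x⟫ 0 := by
    have := line_deriv f (f' x) x (y - x) 0 (by simpa using hgrad x)
    exact this
  -- slope bound from convexity
  have key : ∀ t : ℝ, t ∈ Set.Ioc (0:ℝ) 1 →
      (f (x + t • (y - x)) - f x) / t ≤ f y - f x := by
    intro t ht
    have h1 : f (x + t • (y - x)) ≤ (1 - t) * f x + t * f y := by
      have := hconv.2 (Set.mem_univ x) (Set.mem_univ y)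
        (by linarith [ht.2] : (0:ℝ) ≤ 1 - t) ht.1.le (by ring)
      have heq : (1 - t) • x + t • y = x + t • (y - x) := by
        module
      rw [heq] at this
      simpa using this
    rw [div_le_iff₀ ht.1]
    nlinarith [ht.1]
  have htend : Filter.Tendsto (fun t : ℝ => (f (x + t • (y - x)) - f x) / t)
      (nhdsWithin 0 (Set.Ioi 0)) (nhds ⟪f' x, y - x⟫) := by
    have := hD.tendsto_slope_zero_right
    simpa [slope_def_field, div_eq_inv_mul] using this
  have := le_of_tendsto htend (by
    filter_upwards [Ioc_mem_nhdsGT_of_mem (Set.left_mem_Ico.2 one_pos)] with t ht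
    exact key t ht)
  linarith

lemma descent_lemma (f : EuclideanSpace ℝ (Fin d) → ℝ) (f' : EuclideanSpace ℝ (Fin d) → EuclideanSpace ℝ (Fin d))
    (hgrad : ∀ x, HasGradientAt f (f' x) x)
    (G : ℝ) (hG : 0 < G) (hlip : ∀ x y, ‖f' x - f' y‖ ≤ G * ‖x - y‖)
    (x y : EuclideanSpace ℝ (Fin d)) :
    f y ≤ f x + ⟪f' x, y - x⟫ + G / 2 * ‖y - x‖ ^ 2 := by
  set v := y - x with hv
  set ψ : ℝ → ℝ := fun t => ⟪f' (x + t • v), v⟫ with hψ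
  have hf'cont : Continuous f' := by
    have : LipschitzWith G.toNNReal f' := by
      intro a b
      rw [edist_dist, edist_dist, dist_eq_norm, dist_eq_norm]
      rw [← ENNReal.ofReal_coe_nnreal, ← ENNReal.ofReal_mul (by positivity)]
      refine ENNReal.ofReal_le_ofReal ?_
      calc ‖f' a - f' b‖ ≤ G * ‖a - b‖ := hlip a b
        _ = (G.toNNReal : ℝ) * ‖a - b‖ := by rw [Real.coe_toNNReal _ hG.le]
    exact this.continuous
  have hψcont : Continuous ψ := by
    apply Continuous.inner
    · exact hf'cont.comp (by continuity)
    · exact continuous_const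
  have hderiv : ∀ t ∈ Set.uIcc (0:ℝ) 1, HasDerivAt (fun t : ℝ => f (x + t • v)) (ψ t) t := by
    intro t _
    exact line_deriv f (f' (x + t • v)) x v t (hgrad _)
  have hint : IntervalIntegrable ψ MeasureTheory.volume 0 1 :=
    hψcont.intervalIntegrable 0 1
  have heq : f (x + (1:ℝ) • v) - f (x + (0:ℝ) • v) = ∫ t in (0:ℝ)..1, ψ t :=
    (intervalIntegral.integral_eq_sub_of_hasDerivAt hderiv hint).symm
  have hbd : ∀ t ∈ Set.Icc (0:ℝ) 1, ψ t ≤ ψ 0 + G * ‖v‖ ^ 2 * t := by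
    intro t ht
    have h1 : ψ t - ψ 0 = ⟪f' (x + t • v) - f' (x + (0:ℝ) • v), v⟫ := by
      rw [inner_sub_left]
    have h2 : ⟪f' (x + t • v) - f' (x + (0:ℝ) • v), v⟫ ≤ ‖f' (x + t • v) - f' (x + (0:ℝ) • v)‖ * ‖v‖ :=
      real_inner_le_norm _ _
    have h3 : ‖f' (x + t • v) - f' (x + (0:ℝ) • v)‖ ≤ G * (t * ‖v‖) := by
      have := hlip (x + t • v) (x + (0:ℝ) • v)
      have he : x + t • v - (x + (0:ℝ) • v) = t • v := by module
      rw [he] at this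
      calc ‖f' (x + t • v) - f' (x + (0:ℝ) • v)‖ ≤ G * ‖t • v‖ := this
        _ = G * (t * ‖v‖) := by rw [norm_smul, Real.norm_eq_abs, abs_of_nonneg ht.1]
    nlinarith [norm_nonneg v, ht.1]
  have hmono : (∫ t in (0:ℝ)..1, ψ t) ≤ ∫ t in (0:ℝ)..1, (ψ 0 + G * ‖v‖ ^ 2 * t) := by
    apply intervalIntegral.integral_mono_on zero_le_one hint
    · exact (Continuous.intervalIntegrable (by continuity) 0 1)
    · exact hbd
  have hid : (∫ t in (0:ℝ)..1, t) = 1 / 2 := by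
    simp
  have hrhs : (∫ t in (0:ℝ)..1, (ψ 0 + G * ‖v‖ ^ 2 * t)) = ψ 0 + G / 2 * ‖v‖ ^ 2 := by
    rw [intervalIntegral.integral_add (f := fun _ => ψ 0) (g := fun t => G * ‖v‖ ^ 2 * t) (intervalIntegrable_const)
      (((continuous_const.mul continuous_id' : Continuous fun t : ℝ => G * ‖v‖ ^ 2 * t)).intervalIntegrable 0 1),
      intervalIntegral.integral_const, intervalIntegral.integral_const_mul, hid]
    norm_num
    ring
  have hψ0 : ψ 0 = ⟪f' x, v⟫ := by simp [hψ]
  have h01 : x + (1:ℝ) • v = y := by simp [hv]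
  have h00 : x + (0:ℝ) • v = x := by simp
  rw [h01, h00] at heq
  have := hmono.trans_eq hrhs
  rw [hψ0] at this
  linarith [heq, this]

theorem stmt15 {d : ℕ} (f : EuclideanSpace ℝ (Fin d) → ℝ)
    (f' : EuclideanSpace ℝ (Fin d) → EuclideanSpace ℝ (Fin d))
    (hconv : ConvexOn ℝ Set.univ f)
    (hgrad : ∀ x, HasGradientAt f (f' x) x)
    (G : ℝ) (hG : 0 < G)
    (hlip : ∀ x y, ‖f' x - f' y‖ ≤ G * ‖x - y‖)
    (s : ℝ) (hs0 : 0 < s) (hs : s ≤ 1 / G)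
    (x : ℕ → EuclideanSpace ℝ (Fin d))
    (hiter : ∀ k, x (k + 1) = x k - s • f' (x k))
    (xstar : EuclideanSpace ℝ (Fin d)) (hmin : ∀ y, f xstar ≤ f y) :
    ∀ k : ℕ, 1 ≤ k →
      f (x k) - f xstar ≤ ‖x 0 - xstar‖ ^ 2 / (2 * s * k) := by
  have hGs : G * s ≤ 1 := by
    rw [le_div_iff₀ hG] at hs
    linarith
  set a : ℕ → ℝ := fun k => ‖x k - xstar‖ ^ 2 with ha
  -- descent step
  have hdesc : ∀ k, f (x (k + 1)) ≤ f (x k) - s / 2 * ‖f' (x k)‖ ^ 2 := by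
    intro k
    have h := descent_lemma f f' hgrad G hG hlip (x k) (x (k + 1))
    have hxy : x (k + 1) - x k = -(s • f' (x k)) := by rw [hiter k]; module
    rw [hxy] at h
    have h1 : ⟪f' (x k), -(s • f' (x k))⟫ = -(s * ‖f' (x k)‖ ^ 2) := by
      rw [inner_neg_right, real_inner_smul_right, real_inner_self_eq_norm_sq]
    have h2 : ‖-(s • f' (x k))‖ ^ 2 = s ^ 2 * ‖f' (x k)‖ ^ 2 := by
      rw [norm_neg, norm_smul, Real.norm_eq_abs, mul_pow, sq_abs]
    rw [h1, h2] at h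
    nlinarith [norm_nonneg (f' (x k)), sq_nonneg ‖f' (x k)‖]
  -- monotone decrease
  have hmono : ∀ j k : ℕ, j ≤ k → f (x k) ≤ f (x j) := by
    intro j k hjk
    have : Antitone (fun k => f (x k)) := antitone_nat_of_succ_le (by
      intro n
      have := hdesc n
      nlinarith [sq_nonneg ‖f' (x n)‖])
    exact this hjk
  -- per-step bound
  have hstep : ∀ k, f (x (k + 1)) - f xstar ≤ (a k - a (k + 1)) / (2 * s) := by
    intro k
    have hid : a (k + 1) = a k - 2 * s * ⟪f' (x k), x k - xstar⟫ + s ^ 2 * ‖f' (x k)‖ ^ 2 := by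
      have hxk : x (k + 1) - xstar = (x k - xstar) - s • f' (x k) := by rw [hiter k]; module
      rw [ha]
      simp only
      rw [hxk, norm_sub_sq_real, real_inner_smul_right, norm_smul, Real.norm_eq_abs, mul_pow,
        sq_abs, real_inner_comm]
      ring
    have hcvx : f (x k) ≤ f xstar + ⟪f' (x k), x k - xstar⟫ := by
      have h := grad_ineq f f' hconv hgrad (x k) xstar
      have : ⟪f' (x k), xstar - x k⟫ = -⟪f' (x k), x k - xstar⟫ := by
        rw [← inner_neg_right]; congr 1; module
      rw [this] at h
      linarith
    have hd := hdesc k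
    rw [le_div_iff₀ (by positivity : (0:ℝ) < 2 * s)]
    nlinarith [sq_nonneg ‖f' (x k)‖]
  -- conclude
  intro k hk
  have hkpos : (0:ℝ) < (k:ℝ) := by exact_mod_cast hk
  have hsum : (k:ℝ) * (f (x k) - f xstar) ≤ a 0 / (2 * s) := by
    have h1 : (k:ℝ) * (f (x k) - f xstar) ≤ ∑ j ∈ Finset.range k, (f (x (j + 1)) - f xstar) := by
      calc (k:ℝ) * (f (x k) - f xstar) = ∑ _j ∈ Finset.range k, (f (x k) - f xstar) := by
              rw [Finset.sum_const, Finset.card_range]; ring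
          _ ≤ ∑ j ∈ Finset.range k, (f (x (j + 1)) - f xstar) := by
              apply Finset.sum_le_sum
              intro j hj
              have : f (x k) ≤ f (x (j + 1)) := hmono (j + 1) k (Finset.mem_range.1 hj)
              linarith
    have h2 : ∑ j ∈ Finset.range k, (f (x (j + 1)) - f xstar)
        ≤ ∑ j ∈ Finset.range k, (a j - a (j + 1)) / (2 * s) :=
      Finset.sum_le_sum fun j _ => hstep j
    have h3 : ∑ j ∈ Finset.range k, (a j - a (j + 1)) / (2 * s) = (a 0 - a k) / (2 * s) := by
      rw [← Finset.sum_div, Finset.sum_range_sub']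
    have h4 : (a 0 - a k) / (2 * s) ≤ a 0 / (2 * s) := by
      gcongr
      have : (0:ℝ) ≤ a k := by rw [ha]; positivity
      linarith
    linarith
  rw [le_div_iff₀ (by positivity : (0:ℝ) < 2 * s * k)]
  rw [le_div_iff₀ (by positivity : (0:ℝ) < 2 * s)] at hsum
  have ha0 : a 0 = ‖x 0 - xstar‖ ^ 2 := rfl
  nlinarith [hsum]
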